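/- Define p(n) = Σ_λ (-1)^λ · C(n, ⌊(n+5λ)/2⌋), where the sum is over all integers λ (only finitely many terms are nonzero). Then p(n) = p(n-1) + p(n-2) for all n ≥ 1, with p(-1) = 0 and p(0) = 1. -/
import Mathlib


/-- Binomial coefficient with integer arguments, zero out of range. -/
def C (n k : ℤ) : ℤ := if 0 ≤ k ∧ k ≤ n then (n.toNat.choose k.toNat : ℤ) else 0

/-- `p n = Σ_λ (-1)^λ C(n, ⌊(n+5λ)/2⌋)`, the sum over all integers `λ`
(only finitely many terms are nonzero). -/
noncomputable def p (n : ℤ) : ℤ :=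
  ∑ᶠ l : ℤ, (-1 : ℤ) ^ l.natAbs * C n ((n + 5 * l).fdiv 2)

lemma C_ne_zero {m k : ℤ} (h : C m k ≠ 0) : 0 ≤ k ∧ k ≤ m := by
  unfold C at h
  split_ifs at h with hc
  · exact hc
  · exact absurd rfl h

lemma pascal (m k : ℤ) (hm : 1 ≤ m) : C m k = C (m-1) (k-1) + C (m-1) k := by
  unfold C
  split_ifs with h1 h2 h3 h2 h3 h3 h3
  · -- interior: 1 ≤ k ≤ m-1
    have ha : m.toNat = (m-1).toNat + 1 := by omega
    have hb : k.toNat = (k-1).toNat + 1 := by omega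
    rw [ha, hb, Nat.choose_succ_succ]
    push_cast
    ring
  · -- k = m
    have hk : k = m := by omega
    have ha : m.toNat = (m-1).toNat + 1 := by omega
    have hb : k.toNat = m.toNat := by omega
    have hc : (k-1).toNat = (m-1).toNat := by omega
    rw [hb, hc, Nat.choose_self, Nat.choose_self]
    simp
  · -- k = 0
    have hk : k = 0 := by omega
    have : k.toNat = 0 := by omega
    rw [this, Nat.choose_zero_right]
    have : k.toNat = 0 := by omega
    simp [hk]
  · omega
  · omega
  · omega
  · omega
  · simp

/-- The residual term in the double Pascal expansion. -/
noncomputable def rr (n l : ℤ) : ℤ := C (n-2) ((n + 5*l - 5 * ((n + 5*l) % 2)).fdiv 2)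

lemma fdiv2 (a : ℤ) : a.fdiv 2 = a / 2 := Int.fdiv_eq_ediv_of_nonneg a (by norm_num)

lemma key (n l : ℤ) (hn : 2 ≤ n) :
    C n ((n + 5*l).fdiv 2)
      = C (n-1) ((n - 1 + 5*l).fdiv 2) + C (n-2) ((n - 2 + 5*l).fdiv 2) + rr n l := by
  unfold rr
  rw [fdiv2, fdiv2, fdiv2, fdiv2]
  rcases Int.emod_two_eq (n + 5*l) with hE | hO
  · -- even case: m = 2a
    set a := (n + 5*l) / 2 with ha
    have e1 : (n - 1 + 5*l) / 2 = a - 1 := by omega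
    have e2 : (n - 2 + 5*l) / 2 = a - 1 := by omega
    have e3 : (n + 5*l - 5 * ((n + 5*l) % 2)) / 2 = a := by omega
    rw [e1, e2, e3, pascal n a (by omega), pascal (n-1) a (by omega),
      show n - 1 - 1 = n - 2 by ring]
    ring
  · -- odd case: m = 2a+1
    set a := (n + 5*l) / 2 with ha
    have e1 : (n - 1 + 5*l) / 2 = a := by omega
    have e2 : (n - 2 + 5*l) / 2 = a - 1 := by omega
    have e3 : (n + 5*l - 5 * ((n + 5*l) % 2)) / 2 = a - 2 := by omega
    rw [e1, e2, e3, pascal n a (by omega), pascal (n-1) (a-1) (by omega),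
      show n - 1 - 1 = n - 2 by ring, show a - 1 - 1 = a - 2 by ring]
    ring

lemma supp_p (m : ℤ) :
    (Function.support fun l : ℤ => (-1 : ℤ) ^ l.natAbs * C m ((m + 5*l).fdiv 2)).Finite := by
  apply Set.Finite.subset (Set.finite_Icc (-(m.natAbs : ℤ) - 1) ((m.natAbs : ℤ) + 1))
  intro l hl
  simp only [Function.mem_support] at hl
  have hC : C m ((m + 5*l).fdiv 2) ≠ 0 := by
    intro h; rw [h, mul_zero] at hl; exact hl rfl
  have h2 := C_ne_zero hC
  rw [fdiv2] at h2
  simp only [Set.mem_Icc]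
  omega

lemma supp_rr (n : ℤ) :
    (Function.support fun l : ℤ => (-1 : ℤ) ^ l.natAbs * rr n l).Finite := by
  apply Set.Finite.subset (Set.finite_Icc (-(n.natAbs : ℤ) - 9) ((n.natAbs : ℤ) + 9))
  intro l hl
  simp only [Function.mem_support] at hl
  have hC : rr n l ≠ 0 := by
    intro h; rw [h, mul_zero] at hl; exact hl rfl
  unfold rr at hC
  have h2 := C_ne_zero hC
  rw [fdiv2] at h2
  simp only [Set.mem_Icc]
  omega

lemma sign_succ (l : ℤ) : (-1 : ℤ) ^ (l + 1).natAbs = -(-1 : ℤ) ^ l.natAbs := by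
  rcases (by omega : (l+1).natAbs = l.natAbs + 1 ∨ l.natAbs = (l+1).natAbs + 1) with h | h
  · rw [h, pow_succ]; ring
  · rw [h, pow_succ]; ring

lemma rr_succ (n l : ℤ) (h : (n + 5*l) % 2 = 0) : rr n (l + 1) = rr n l := by
  unfold rr
  congr 1
  rw [fdiv2, fdiv2]
  omega

lemma cancel (n : ℤ) : ∑ᶠ l : ℤ, (-1 : ℤ) ^ l.natAbs * rr n l = 0 := by
  set g : ℤ → ℤ := fun l => (-1 : ℤ) ^ l.natAbs * rr n l with hg
  set gE : ℤ → ℤ := fun l => if (n + 5*l) % 2 = 0 then g l else 0 with hgE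
  set gO : ℤ → ℤ := fun l => if (n + 5*l) % 2 = 0 then 0 else g l with hgO
  have hsplit : ∀ l, g l = gE l + gO l := by
    intro l; simp only [hgE, hgO]; split_ifs <;> ring
  have hE_fin : (Function.support gE).Finite := by
    apply (supp_rr n).subset
    intro l hl
    simp only [Function.mem_support, hgE] at hl ⊢
    split_ifs at hl
    · exact hl
    · exact absurd rfl hl
  have hO_fin : (Function.support gO).Finite := by
    apply (supp_rr n).subset
    intro l hl
    simp only [Function.mem_support, hgO] at hl ⊢
    split_ifs at hl
    · exact absurd rfl hl
    · exact hl
  have hOE : ∀ l : ℤ, gO (l + 1) = -gE l := by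
    intro l
    simp only [hgO, hgE, hg]
    rcases Int.emod_two_eq (n + 5*l) with h | h
    · have h1 : (n + 5*(l+1)) % 2 = 1 := by omega
      rw [if_neg (by omega), if_pos h, sign_succ, rr_succ n l h]
      ring
    · have h1 : (n + 5*(l+1)) % 2 = 0 := by omega
      rw [if_pos h1, if_neg (by omega)]
      ring
  have hO_eq : ∑ᶠ l : ℤ, gO l = -∑ᶠ l : ℤ, gE l := by
    have := finsum_comp_equiv (Equiv.addRight (1 : ℤ)) (f := gO)
    simp only [Equiv.coe_addRight] at this
    rw [← this]
    have : ∀ l : ℤ, gO (l + 1) = -gE l := hOE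
    calc (∑ᶠ l : ℤ, gO (l + 1)) = ∑ᶠ l : ℤ, -gE l := by
          exact finsum_congr hOE
      _ = -∑ᶠ l : ℤ, gE l := by
          rw [← finsum_neg_distrib]
  calc (∑ᶠ l : ℤ, g l) = ∑ᶠ l : ℤ, (gE l + gO l) := finsum_congr hsplit
    _ = (∑ᶠ l : ℤ, gE l) + ∑ᶠ l : ℤ, gO l := finsum_add_distrib hE_fin hO_fin
    _ = 0 := by rw [hO_eq]; ring

theorem gs1_amateur :
    (∀ n : ℤ, 1 ≤ n → p n = p (n - 1) + p (n - 2)) ∧ p (-1) = 0 ∧ p 0 = 1 := by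
  have hCneg : ∀ k : ℤ, C (-1) k = 0 := by
    intro k; unfold C; split_ifs with h
    · omega
    · rfl
  have hpneg : p (-1) = 0 := by
    unfold p
    apply finsum_eq_zero_of_forall_eq_zero
    intro l; rw [hCneg, mul_zero]
  have hp0 : p 0 = 1 := by
    unfold p
    rw [finsum_eq_single _ 0]
    · norm_num [C, fdiv2]
    · intro l hl
      have : C 0 ((0 + 5*l).fdiv 2) = 0 := by
        unfold C; rw [fdiv2]; split_ifs with h
        · omega
        · rfl
      rw [this, mul_zero]
  have hp1 : p 1 = 1 := by
    unfold p
    rw [finsum_eq_single _ 0]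
    · norm_num [C, fdiv2]
    · intro l hl
      have : C 1 ((1 + 5*l).fdiv 2) = 0 := by
        unfold C; rw [fdiv2]; split_ifs with h
        · omega
        · rfl
      rw [this, mul_zero]
  refine ⟨?_, hpneg, hp0⟩
  intro n hn
  rcases eq_or_lt_of_le hn with h1 | h2
  · rw [← h1]; norm_num [hp1, hp0, hpneg]
  · -- n ≥ 2
    have hn2 : 2 ≤ n := h2
    unfold p
    calc (∑ᶠ l : ℤ, (-1 : ℤ) ^ l.natAbs * C n ((n + 5*l).fdiv 2))
        = ∑ᶠ l : ℤ, ((-1 : ℤ) ^ l.natAbs * C (n-1) ((n - 1 + 5*l).fdiv 2)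
            + ((-1 : ℤ) ^ l.natAbs * C (n-2) ((n - 2 + 5*l).fdiv 2)
              + (-1 : ℤ) ^ l.natAbs * rr n l)) := by
          apply finsum_congr
          intro l
          rw [key n l hn2]
          ring
      _ = (∑ᶠ l : ℤ, (-1 : ℤ) ^ l.natAbs * C (n-1) ((n - 1 + 5*l).fdiv 2))
            + ∑ᶠ l : ℤ, ((-1 : ℤ) ^ l.natAbs * C (n-2) ((n - 2 + 5*l).fdiv 2)
              + (-1 : ℤ) ^ l.natAbs * rr n l) := by
          apply finsum_add_distrib (supp_p (n-1))
          apply ((supp_p (n-2)).union (supp_rr n)).subset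
          exact Function.support_add _ _
      _ = (∑ᶠ l : ℤ, (-1 : ℤ) ^ l.natAbs * C (n-1) ((n - 1 + 5*l).fdiv 2))
            + ((∑ᶠ l : ℤ, (-1 : ℤ) ^ l.natAbs * C (n-2) ((n - 2 + 5*l).fdiv 2))
              + ∑ᶠ l : ℤ, (-1 : ℤ) ^ l.natAbs * rr n l) := by
          rw [finsum_add_distrib (supp_p (n-2)) (supp_rr n)]
      _ = (∑ᶠ l : ℤ, (-1 : ℤ) ^ l.natAbs * C (n-1) ((n - 1 + 5*l).fdiv 2))
            + ∑ᶠ l : ℤ, (-1 : ℤ) ^ l.natAbs * C (n-2) ((n - 2 + 5*l).fdiv 2) := by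
          rw [cancel n]; ring
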